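/- A pair (R,T) of finite subsets of ℕ is a factorization of ℤ/nℤ (i.e., for every z ∈ {0,...,n−1} there is a unique pair (r,t) ∈ R × T with r + t ≡ z mod n) if and only if there exists a finite subset H of ℕ such that, as polynomials in ℤ[a], a^R · a^T = (1 + a + ... + a^{n−1}) + a^H (a^n − 1). -/

import Mathlib

open Polynomial

/-- `(R, T)` is a factorization of `ℤ/nℤ`: every `z ∈ {0, …, n-1}` has a unique
representation `z ≡ r + t (mod n)` with `r ∈ R`, `t ∈ T`. -/
def IsFactorization (n : ℕ) (R T : Finset ℕ) : Prop :=
  ∀ z < n, ∃! p : ℕ × ℕ, p.1 ∈ R ∧ p.2 ∈ T ∧ (p.1 + p.2) % n = z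

/-- For a finite set `S ⊆ ℕ`, the polynomial `a^S = Σ_{s ∈ S} a^s ∈ ℤ[a]`. -/
noncomputable def polyOf (S : Finset ℕ) : Polynomial ℤ :=
  ∑ s ∈ S, Polynomial.X ^ s

lemma polyOf_mul (R T : Finset ℕ) :
    polyOf R * polyOf T = ∑ p ∈ R ×ˢ T, (X : Polynomial ℤ) ^ (p.1 + p.2) := by
  rw [polyOf, polyOf, Finset.sum_mul_sum, Finset.sum_product]
  simp [pow_add]

lemma pow_decomp (n : ℕ) (hn : 0 < n) (k : ℕ) :
    (X : Polynomial ℤ) ^ k =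
      X ^ (k % n) +
        (∑ j ∈ Finset.range (k / n), X ^ (k % n + n * j)) * (X ^ n - 1) := by
  have h1 : (∑ j ∈ Finset.range (k / n), ((X : Polynomial ℤ) ^ n) ^ j) * (X ^ n - 1)
      = (X ^ n) ^ (k / n) - 1 := geom_sum_mul _ _
  have h2 : (X : Polynomial ℤ) ^ k = X ^ (k % n) * (X ^ n) ^ (k / n) := by
    rw [← pow_mul, ← pow_add, Nat.mod_add_div]
  have h3 : (∑ j ∈ Finset.range (k / n), (X : Polynomial ℤ) ^ (k % n + n * j))
      = X ^ (k % n) * ∑ j ∈ Finset.range (k / n), ((X : Polynomial ℤ) ^ n) ^ j := by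
    rw [Finset.mul_sum]
    refine Finset.sum_congr rfl fun j _ => ?_
    rw [← pow_mul, ← pow_add]
  rw [h3, mul_assoc, h1, h2]; ring

lemma key (n : ℕ) (hn : 0 < n) (R T : Finset ℕ) :
    polyOf R * polyOf T =
      (∑ p ∈ R ×ˢ T, (X : Polynomial ℤ) ^ ((p.1 + p.2) % n)) +
        (∑ p ∈ R ×ˢ T, ∑ j ∈ Finset.range ((p.1 + p.2) / n),
            (X : Polynomial ℤ) ^ ((p.1 + p.2) % n + n * j)) * (X ^ n - 1) := by
  rw [polyOf_mul, Finset.sum_congr rfl (fun p _ => pow_decomp n hn (p.1 + p.2)),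
    Finset.sum_add_distrib, Finset.sum_mul]

lemma existsUnique_iff_card (n z : ℕ) (R T : Finset ℕ) :
    (∃! p : ℕ × ℕ, p.1 ∈ R ∧ p.2 ∈ T ∧ (p.1 + p.2) % n = z) ↔
      ((R ×ˢ T).filter (fun p => (p.1 + p.2) % n = z)).card = 1 := by
  rw [Finset.card_eq_one]
  constructor
  · rintro ⟨a, ⟨h1, h2, h3⟩, hu⟩
    refine ⟨a, ?_⟩
    ext b
    simp only [Finset.mem_filter, Finset.mem_product, Finset.mem_singleton]
    constructor
    · rintro ⟨⟨hb1, hb2⟩, hb3⟩; exact hu b ⟨hb1, hb2, hb3⟩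
    · rintro rfl; exact ⟨⟨h1, h2⟩, h3⟩
  · rintro ⟨a, ha⟩
    have h : a ∈ (R ×ˢ T).filter (fun p => (p.1 + p.2) % n = z) := by
      rw [ha]; exact Finset.mem_singleton_self a
    simp only [Finset.mem_filter, Finset.mem_product] at h
    refine ⟨a, ⟨h.1.1, h.1.2, h.2⟩, fun b hb => ?_⟩
    have hb' : b ∈ (R ×ˢ T).filter (fun p => (p.1 + p.2) % n = z) := by
      simp only [Finset.mem_filter, Finset.mem_product]
      exact ⟨⟨hb.1, hb.2.1⟩, hb.2.2⟩
    rwa [ha, Finset.mem_singleton] at hb'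

lemma low_eq_iff (n : ℕ) (hn : 0 < n) (R T : Finset ℕ) :
    (∑ p ∈ R ×ˢ T, (X : Polynomial ℤ) ^ ((p.1 + p.2) % n))
        = ∑ i ∈ Finset.range n, X ^ i ↔
      ∀ z < n, ((R ×ˢ T).filter (fun p => (p.1 + p.2) % n = z)).card = 1 := by
  have hcoeff : ∀ z : ℕ,
      (∑ p ∈ R ×ˢ T, (X : Polynomial ℤ) ^ ((p.1 + p.2) % n)).coeff z
        = (((R ×ˢ T).filter (fun p => (p.1 + p.2) % n = z)).card : ℤ) := by
    intro z
    rw [Polynomial.finset_sum_coeff, Finset.card_filter, Nat.cast_sum]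
    refine Finset.sum_congr rfl fun p _ => ?_
    rw [Polynomial.coeff_X_pow]
    by_cases h : (p.1 + p.2) % n = z
    · simp [h]
    · simp only [h, if_false]
      rw [if_neg (fun hz : z = (p.1 + p.2) % n => h hz.symm)]
      simp
  have hcoeff2 : ∀ z : ℕ,
      (∑ i ∈ Finset.range n, (X : Polynomial ℤ) ^ i).coeff z
        = if z < n then 1 else 0 := by
    intro z
    rw [Polynomial.finset_sum_coeff]
    simp only [Polynomial.coeff_X_pow]
    rw [Finset.sum_ite_eq (Finset.range n) z (fun _ => (1 : ℤ))]
    simp [Finset.mem_range]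
  constructor
  · intro h z hz
    have := congrArg (fun q => Polynomial.coeff q z) h
    rw [hcoeff, hcoeff2] at this
    rw [if_pos hz] at this
    exact_mod_cast this
  · intro h
    ext z
    rw [hcoeff, hcoeff2]
    by_cases hz : z < n
    · rw [if_pos hz, h z hz]; norm_num
    · rw [if_neg hz]
      have : (R ×ˢ T).filter (fun p => (p.1 + p.2) % n = z) = ∅ := by
        refine Finset.filter_false_of_mem fun p _ => ?_
        intro hc
        exact hz (hc ▸ Nat.mod_lt _ hn)
      rw [this]; simp

theorem isFactorization_iff_poly (n : ℕ) (hn : 0 < n) (R T : Finset ℕ) :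
    IsFactorization n R T ↔
      ∃ H : Finset ℕ,
        polyOf R * polyOf T =
          (∑ i ∈ Finset.range n, (Polynomial.X : Polynomial ℤ) ^ i) +
            polyOf H * (Polynomial.X ^ n - 1) := by
  have hiff : IsFactorization n R T ↔
      ∀ z < n, ((R ×ˢ T).filter (fun p => (p.1 + p.2) % n = z)).card = 1 := by
    unfold IsFactorization
    exact forall₂_congr fun z _ => existsUnique_iff_card n z R T
  rw [hiff]
  constructor
  · intro hcard
    refine ⟨((R ×ˢ T).sigma fun p => Finset.range ((p.1 + p.2) / n)).image
        (fun q => (q.1.1 + q.1.2) % n + n * q.2), ?_⟩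
    rw [key n hn, (low_eq_iff n hn R T).2 hcard]
    congr 1
    rw [polyOf]
    rw [Finset.sum_image]
    · rw [Finset.sum_sigma]
    · rintro ⟨p, j⟩ hq ⟨p', j'⟩ hq' heq
      simp only at heq
      simp only [Finset.mem_coe, Finset.mem_sigma, Finset.mem_range] at hq hq'
      have hz : (p.1 + p.2) % n = (p'.1 + p'.2) % n := by
        have h1 : ((p.1 + p.2) % n + n * j) % n = (p.1 + p.2) % n := by
          rw [Nat.add_mul_mod_self_left, Nat.mod_mod_of_dvd] <;> simp [Nat.mod_mod]
        have h2 : ((p'.1 + p'.2) % n + n * j') % n = (p'.1 + p'.2) % n := by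
          rw [Nat.add_mul_mod_self_left, Nat.mod_mod_of_dvd] <;> simp [Nat.mod_mod]
        rw [← h1, ← h2, heq]
      have hp : p = p' := by
        have hzlt : (p.1 + p.2) % n < n := Nat.mod_lt _ hn
        have hc := hcard _ hzlt
        have hone := Finset.card_le_one.mp (le_of_eq hc)
        refine hone p ?_ p' ?_
        · exact Finset.mem_filter.mpr ⟨hq.1, rfl⟩
        · exact Finset.mem_filter.mpr ⟨hq'.1, hz.symm⟩
      subst hp
      have hj : j = j' := by
        rw [hz] at heq
        exact Nat.eq_of_mul_eq_mul_left hn (Nat.add_left_cancel heq)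
      rw [hj]
  · rintro ⟨H, hH⟩
    rw [key n hn R T] at hH
    set low := ∑ p ∈ R ×ˢ T, (X : Polynomial ℤ) ^ ((p.1 + p.2) % n) with hlowdef
    set Q := ∑ p ∈ R ×ˢ T, ∑ j ∈ Finset.range ((p.1 + p.2) / n),
        (X : Polynomial ℤ) ^ ((p.1 + p.2) % n + n * j) with hQdef
    set S := ∑ i ∈ Finset.range n, (X : Polynomial ℤ) ^ i with hSdef
    have hsub : low - S = (polyOf H - Q) * (X ^ n - 1) := by
      rw [sub_mul]
      linear_combination hH
    have hdeglow : low.degree < (n : WithBot ℕ) := by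
      refine lt_of_le_of_lt (Polynomial.degree_sum_le _ _) ?_
      rw [Finset.sup_lt_iff (by exact_mod_cast WithBot.bot_lt_coe n)]
      intro p _
      rw [Polynomial.degree_X_pow]
      exact_mod_cast Nat.mod_lt _ hn
    have hdegS : S.degree < (n : WithBot ℕ) := by
      refine lt_of_le_of_lt (Polynomial.degree_sum_le _ _) ?_
      rw [Finset.sup_lt_iff (by exact_mod_cast WithBot.bot_lt_coe n)]
      intro i hi
      rw [Polynomial.degree_X_pow]
      exact_mod_cast Finset.mem_range.mp hi
    have hlowS : low = S := by
      by_contra hne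
      have hD : polyOf H - Q ≠ 0 := by
        intro h0
        rw [h0, zero_mul] at hsub
        exact hne (sub_eq_zero.mp hsub)
      have hdeg1 : (low - S).degree < (n : WithBot ℕ) :=
        lt_of_le_of_lt (Polynomial.degree_sub_le _ _) (max_lt hdeglow hdegS)
      have hXn : ((X : Polynomial ℤ) ^ n - 1).degree = (n : WithBot ℕ) := by
        have := Polynomial.degree_X_pow_sub_C hn (1 : ℤ)
        rwa [map_one] at this
      have hdeg2 : (n : WithBot ℕ) ≤ ((polyOf H - Q) * (X ^ n - 1)).degree := by
        rw [Polynomial.degree_mul, hXn]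
        have h0 : (0 : WithBot ℕ) ≤ (polyOf H - Q).degree :=
          Polynomial.zero_le_degree_iff.mpr hD
        calc (n : WithBot ℕ) = 0 + n := by rw [zero_add]
          _ ≤ (polyOf H - Q).degree + n := add_le_add_left h0 _
      rw [← hsub] at hdeg2
      exact absurd hdeg1 (not_lt.mpr hdeg2)
    exact (low_eq_iff n hn R T).1 hlowS
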